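/- On the curve defined by (x+1)(y+1)(x+y) = αxy, the rational maps X(x,y) = α(x+y+1)/(x+y−α), Y(x,y) = α(−αx+y+1)/(x+y−α) and x(X,Y) = (X−Y)/(X−α), y(X,Y) = (Y+(α−1)X+α)/(X−α) are mutually inverse birational maps onto the curve Y² + (α−2)XY + αY = X³. -/

import Mathlib

/-- The rational maps `X(x,y) = α(x+y+1)/(x+y−α)`, `Y(x,y) = α(−αx+y+1)/(x+y−α)` and
`x(X,Y) = (X−Y)/(X−α)`, `y(X,Y) = (Y+(α−1)X+α)/(X−α)` are mutually inverse birational maps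
between the curve `(x+1)(y+1)(x+y) = αxy` and the Deuring curve `Y² + (α−2)XY + αY = X³`,
i.e. each map sends one curve to the other and the compositions are the identity wherever
defined. -/
theorem birational_maps (α : ℚ) (hα0 : α ≠ 0) (hα1 : α ≠ -1) :
    (∀ x y : ℚ, (x + 1) * (y + 1) * (x + y) = α * x * y → x + y ≠ α →
      let X := α * (x + y + 1) / (x + y - α)
      let Y := α * (-α * x + y + 1) / (x + y - α)
      Y ^ 2 + (α - 2) * X * Y + α * Y = X ^ 3 ∧
        (X ≠ α → (X - Y) / (X - α) = x ∧ (Y + (α - 1) * X + α) / (X - α) = y)) ∧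
    (∀ X Y : ℚ, Y ^ 2 + (α - 2) * X * Y + α * Y = X ^ 3 → X ≠ α →
      let x := (X - Y) / (X - α)
      let y := (Y + (α - 1) * X + α) / (X - α)
      (x + 1) * (y + 1) * (x + y) = α * x * y ∧
        (x + y ≠ α →
          α * (x + y + 1) / (x + y - α) = X ∧ α * (-α * x + y + 1) / (x + y - α) = Y)) := by
  have hα1' : α + 1 ≠ 0 := fun h => hα1 (by linarith)
  constructor
  · intro x y h hs
    have hs' : x + y - α ≠ 0 := sub_ne_zero.mpr hs
    have hX' : α * (x + y + 1) / (x + y - α) - α ≠ 0 := by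
      have e : α * (x + y + 1) / (x + y - α) - α = α * (α + 1) / (x + y - α) := by
        field_simp; ring
      rw [e]
      exact div_ne_zero (mul_ne_zero hα0 hα1') hs'
    refine ⟨?_, fun _ => ⟨?_, ?_⟩⟩
    · show (α * (-α * x + y + 1) / (x + y - α)) ^ 2 +
        (α - 2) * (α * (x + y + 1) / (x + y - α)) * (α * (-α * x + y + 1) / (x + y - α)) +
        α * (α * (-α * x + y + 1) / (x + y - α)) = (α * (x + y + 1) / (x + y - α)) ^ 3
      field_simp
      linear_combination (-(α + 1) ^ 2) * h
    · show (α * (x + y + 1) / (x + y - α) - α * (-α * x + y + 1) / (x + y - α)) /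
        (α * (x + y + 1) / (x + y - α) - α) = x
      rw [div_eq_iff hX']
      field_simp
      ring
    · show (α * (-α * x + y + 1) / (x + y - α) + (α - 1) * (α * (x + y + 1) / (x + y - α)) + α) /
        (α * (x + y + 1) / (x + y - α) - α) = y
      rw [div_eq_iff hX']
      field_simp
      ring
  · intro X Y h hX
    have hX' : X - α ≠ 0 := sub_ne_zero.mpr hX
    refine ⟨?_, fun hs => ?_⟩
    · show ((X - Y) / (X - α) + 1) * ((Y + (α - 1) * X + α) / (X - α) + 1) *
        ((X - Y) / (X - α) + (Y + (α - 1) * X + α) / (X - α)) =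
        α * ((X - Y) / (X - α)) * ((Y + (α - 1) * X + α) / (X - α))
      field_simp
      linear_combination (-(α ^ 2 + α)) * h
    · have hs' : (X - Y) / (X - α) + (Y + (α - 1) * X + α) / (X - α) - α ≠ 0 :=
        sub_ne_zero.mpr hs
      constructor
      · show α * ((X - Y) / (X - α) + (Y + (α - 1) * X + α) / (X - α) + 1) /
          ((X - Y) / (X - α) + (Y + (α - 1) * X + α) / (X - α) - α) = X
        rw [div_eq_iff hs']
        field_simp
        ring
      · show α * (-α * ((X - Y) / (X - α)) + (Y + (α - 1) * X + α) / (X - α) + 1) /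
          ((X - Y) / (X - α) + (Y + (α - 1) * X + α) / (X - α) - α) = Y
        rw [div_eq_iff hs']
        field_simp
        ring
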